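/- For all positive invertible bounded operators A and B on a complex Hilbert space, (A ∇ B) ♯ (A ! B) = A ♯ B. -/

import Mathlib

set_option maxHeartbeats 2000000
set_option synthInstance.maxHeartbeats 1000000

variable {H : Type*} [NormedAddCommGroup H] [InnerProductSpace ℂ H] [CompleteSpace H]

/-- Real power `A^r` of a bounded operator, via the continuous functional calculus. -/
noncomputable def opRpow (A : H →L[ℂ] H) (r : ℝ) : H →L[ℂ] H :=
  cfc (fun x : ℝ => x ^ r) A

/-- The weighted operator geometric mean
`A ♯_μ B = A^{1/2} (A^{-1/2} B A^{-1/2})^μ A^{1/2}`. -/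
noncomputable def wgm (μ : ℝ) (A B : H →L[ℂ] H) : H →L[ℂ] H :=
  opRpow A (1/2) * opRpow (opRpow A (-(1/2)) * B * opRpow A (-(1/2))) μ * opRpow A (1/2)

/-- The operator geometric mean `A ♯ B`. -/
noncomputable def geomMean (A B : H →L[ℂ] H) : H →L[ℂ] H := wgm (1/2) A B

/-- The operator arithmetic mean `A ∇ B = (A + B)/2`. -/
noncomputable def arithMean (A B : H →L[ℂ] H) : H →L[ℂ] H := ((1 : ℝ)/2) • (A + B)

/-- The operator harmonic mean `A ! B = ((A⁻¹ + B⁻¹)/2)⁻¹`. -/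
noncomputable def harmMean (A B : H →L[ℂ] H) : H →L[ℂ] H :=
  Ring.inverse (((1 : ℝ)/2) • (Ring.inverse A + Ring.inverse B))

section Aux

lemma ringInverse_eq {a b : H →L[ℂ] H} (h1 : a * b = 1) (h2 : b * a = 1) :
    Ring.inverse a = b := by
  have h := Ring.inverse_unit (⟨a, b, h1, h2⟩ : (H →L[ℂ] H)ˣ)
  simpa using h

lemma spec_pos {D : H →L[ℂ] H} (hD : 0 ≤ D) (hDu : IsUnit D) :
    ∀ x ∈ spectrum ℝ D, 0 < x := fun x hx =>
  lt_of_le_of_ne (spectrum_nonneg_of_nonneg hD hx)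
    (fun h => spectrum.zero_notMem ℝ hDu (h ▸ hx))

lemma contOn_aux {D : H →L[ℂ] H} (hpos : ∀ x ∈ spectrum ℝ D, 0 < x) {f : ℝ → ℝ}
    (hf : ∀ x : ℝ, 0 < x → ContinuousAt f x) : ContinuousOn f (spectrum ℝ D) :=
  fun x hx => (hf x (hpos x hx)).continuousWithinAt

lemma contAt_rpow (r : ℝ) : ∀ x : ℝ, 0 < x → ContinuousAt (fun y : ℝ => y ^ r) x :=
  fun x hx => Real.continuousAt_rpow_const x r (Or.inl hx.ne')

lemma opRpow_mul_opRpow {D : H →L[ℂ] H} (hD : 0 ≤ D) (hDu : IsUnit D) (r s : ℝ) :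
    opRpow D r * opRpow D s = opRpow D (r + s) := by
  have hpos := spec_pos hD hDu
  rw [opRpow, opRpow, opRpow,
    ← cfc_mul _ _ D (contOn_aux hpos (contAt_rpow r)) (contOn_aux hpos (contAt_rpow s))]
  exact cfc_congr fun x hx => (Real.rpow_add (hpos x hx) r s).symm

lemma opRpow_zero {D : H →L[ℂ] H} (hD : 0 ≤ D) : opRpow D 0 = 1 := by
  rw [opRpow]
  simp only [Real.rpow_zero]
  exact cfc_const_one ℝ D (IsSelfAdjoint.of_nonneg hD)

lemma opRpow_one {D : H →L[ℂ] H} (hD : 0 ≤ D) : opRpow D 1 = D := by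
  rw [opRpow]
  simp only [Real.rpow_one]
  exact cfc_id' ℝ D (IsSelfAdjoint.of_nonneg hD)

lemma opRpow_nonneg {D : H →L[ℂ] H} (hD : 0 ≤ D) (r : ℝ) : 0 ≤ opRpow D r :=
  cfc_nonneg fun x hx => Real.rpow_nonneg (spectrum_nonneg_of_nonneg hD hx) r

lemma conj_nonneg' {S X : H →L[ℂ] H} (hS : IsSelfAdjoint S) (hX : 0 ≤ X) :
    0 ≤ S * X * S := by
  simpa [hS.star_eq] using star_left_conjugate_nonneg hX S

lemma opRpow_half_unique {D Y : H →L[ℂ] H} (hD : 0 ≤ D) (hY : 0 ≤ Y)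
    (h : Y * Y = D) : opRpow D (1/2) = Y := by
  rw [← CFC.sqrt_unique h hY, CFC.sqrt_eq_cfc, cfc_nnreal_eq_real NNReal.sqrt D hD, opRpow]
  refine cfc_congr fun x hx => ?_
  rw [← Real.sqrt_eq_rpow]
  rw [Real.sqrt]

/-- Uniqueness: the geometric mean is the unique positive solution of the Riccati
equation `X A⁻¹ X = B`. -/
lemma geomMean_unique {A B X : H →L[ℂ] H} (hA : 0 ≤ A) (hAu : IsUnit A)
    (hX : 0 ≤ X) (h : X * Ring.inverse A * X = B) : geomMean A B = X := by
  have key := opRpow_mul_opRpow hA hAu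
  set S := opRpow A (1/2) with hSdef
  set T := opRpow A (-(1/2)) with hTdef
  have hST : S * T = 1 := by
    rw [hSdef, hTdef, key]; norm_num [opRpow_zero hA]
  have hTS : T * S = 1 := by
    rw [hSdef, hTdef, key]; norm_num [opRpow_zero hA]
  have hcl1 : ∀ Z : H →L[ℂ] H, S * (T * Z) = Z := fun Z => by
    rw [← mul_assoc, hST, one_mul]
  have hAinv : Ring.inverse A = T * T := by
    refine ringInverse_eq ?_ ?_
    · rw [← opRpow_one hA, hTdef, ← mul_assoc, key, key]
      norm_num [opRpow_zero hA]
    · rw [← opRpow_one hA, hTdef, key, key]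
      norm_num [opRpow_zero hA]
  have hTsa : IsSelfAdjoint T := by
    rw [hTdef]; exact IsSelfAdjoint.of_nonneg (opRpow_nonneg hA _)
  set C := T * B * T with hCdef
  set Y := T * X * T with hYdef
  have hYpos : 0 ≤ Y := by rw [hYdef]; exact conj_nonneg' hTsa hX
  have hYY : Y * Y = C := by
    rw [hYdef, hCdef, ← h, hAinv]
    simp only [mul_assoc]
  have hC0 : 0 ≤ C := by
    rw [← hYY]
    simpa [(IsSelfAdjoint.of_nonneg hYpos).star_eq] using star_mul_self_nonneg Y
  have hR : opRpow C (1/2) = Y := opRpow_half_unique hC0 hYpos hYY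
  have hgeom : geomMean A B = S * opRpow C (1/2) * S := by
    unfold geomMean wgm
    rw [← hSdef, ← hTdef, ← hCdef]
  rw [hgeom, hR, hYdef]
  simp only [mul_assoc, hTS, mul_one, hcl1]

end Aux

/-- For positive invertible operators, `(A ∇ B) ♯ (A ! B) = A ♯ B`. -/
theorem arith_harm_geomMean
    (A B : H →L[ℂ] H)
    (hA : 0 ≤ A) (hAu : IsUnit A) (hB : 0 ≤ B) (hBu : IsUnit B) :
    geomMean (arithMean A B) (harmMean A B) = geomMean A B := by
  have key := opRpow_mul_opRpow hA hAu
  set S := opRpow A (1/2) with hSdef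
  set T := opRpow A (-(1/2)) with hTdef
  have hST : S * T = 1 := by
    rw [hSdef, hTdef, key]; norm_num [opRpow_zero hA]
  have hTS : T * S = 1 := by
    rw [hSdef, hTdef, key]; norm_num [opRpow_zero hA]
  have hSS : S * S = A := by
    rw [hSdef, key]; norm_num [opRpow_one hA]
  have hcl1 : ∀ Z : H →L[ℂ] H, S * (T * Z) = Z := fun Z => by
    rw [← mul_assoc, hST, one_mul]
  have hcl2 : ∀ Z : H →L[ℂ] H, T * (S * Z) = Z := fun Z => by
    rw [← mul_assoc, hTS, one_mul]
  have mk : ∀ {P Q : H →L[ℂ] H}, P * Q = 1 → ∀ Z : H →L[ℂ] H, P * (Q * Z) = Z :=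
    fun {P Q} h Z => by rw [← mul_assoc, h, one_mul]
  have hAinv : Ring.inverse A = T * T := by
    refine ringInverse_eq ?_ ?_
    · rw [← opRpow_one hA, hTdef, ← mul_assoc, key, key]
      norm_num [opRpow_zero hA]
    · rw [← opRpow_one hA, hTdef, key, key]
      norm_num [opRpow_zero hA]
  have hSpos : 0 ≤ S := by rw [hSdef]; exact opRpow_nonneg hA _
  have hTpos : 0 ≤ T := by rw [hTdef]; exact opRpow_nonneg hA _
  have hSsa : IsSelfAdjoint S := .of_nonneg hSpos
  have hTsa : IsSelfAdjoint T := .of_nonneg hTpos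
  have hSu : IsUnit S := ⟨⟨S, T, hST, hTS⟩, rfl⟩
  have hTu : IsUnit T := ⟨⟨T, S, hTS, hST⟩, rfl⟩
  set C := T * B * T with hCdef
  have hC0 : 0 ≤ C := by rw [hCdef]; exact conj_nonneg' hTsa hB
  have hCu : IsUnit C := by rw [hCdef]; exact (hTu.mul hBu).mul hTu
  have hCpos := spec_pos hC0 hCu
  have hCsa : IsSelfAdjoint C := .of_nonneg hC0
  -- helper for multiplying two cfc's of C
  have mulC : ∀ (f g h : ℝ → ℝ), (∀ x : ℝ, 0 < x → ContinuousAt f x) →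
      (∀ x : ℝ, 0 < x → ContinuousAt g x) → (∀ x : ℝ, 0 < x → f x * g x = h x) →
      cfc f C * cfc g C = cfc h C := by
    intro f g h hf hg hfg
    rw [← cfc_mul f g C (contOn_aux hCpos hf) (contOn_aux hCpos hg)]
    exact cfc_congr fun x hx => hfg x (hCpos x hx)
  -- continuity facts
  have c1 : ∀ x : ℝ, 0 < x → ContinuousAt (fun x : ℝ => 2⁻¹ * (1 + x)) x := by
    intro x hx; fun_prop
  have c2 : ∀ x : ℝ, 0 < x → ContinuousAt (fun x : ℝ => (2⁻¹ * (1 + x))⁻¹) x := by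
    intro x hx
    exact (c1 x hx).inv₀ (by positivity)
  have c3 : ∀ x : ℝ, 0 < x → ContinuousAt (fun x : ℝ => x⁻¹) x := fun x hx =>
    continuousAt_inv₀ hx.ne'
  have c4 : ∀ x : ℝ, 0 < x → ContinuousAt (fun x : ℝ => 2⁻¹ * (1 + x⁻¹)) x := fun x hx =>
    ((continuousAt_const.add (continuousAt_inv₀ hx.ne')).const_mul _)
  have hxinv_pos : ∀ x : ℝ, 0 < x → (0:ℝ) < 2⁻¹ * (1 + x⁻¹) := by
    intro x hx
    have h1 : (0:ℝ) < x⁻¹ := inv_pos.mpr hx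
    nlinarith
  have c5 : ∀ x : ℝ, 0 < x → ContinuousAt (fun x : ℝ => (2⁻¹ * (1 + x⁻¹))⁻¹) x := fun x hx =>
    (c4 x hx).inv₀ (hxinv_pos x hx).ne'
  -- cfc identities
  have hMM' : cfc (fun x : ℝ => 2⁻¹ * (1 + x)) C * cfc (fun x : ℝ => (2⁻¹ * (1 + x))⁻¹) C = 1 := by
    rw [mulC _ _ (fun _ => (1:ℝ)) c1 c2 (fun x hx => mul_inv_cancel₀ (by positivity))]
    exact cfc_const_one ℝ C hCsa
  have hM'M : cfc (fun x : ℝ => (2⁻¹ * (1 + x))⁻¹) C * cfc (fun x : ℝ => 2⁻¹ * (1 + x)) C = 1 := by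
    rw [mulC _ _ (fun _ => (1:ℝ)) c2 c1 (fun x hx => inv_mul_cancel₀ (by positivity))]
    exact cfc_const_one ℝ C hCsa
  have hKN : cfc (fun x : ℝ => 2⁻¹ * (1 + x⁻¹)) C *
      cfc (fun x : ℝ => (2⁻¹ * (1 + x⁻¹))⁻¹) C = 1 := by
    rw [mulC _ _ (fun _ => (1:ℝ)) c4 c5 (fun x hx => mul_inv_cancel₀ (hxinv_pos x hx).ne')]
    exact cfc_const_one ℝ C hCsa
  have hCC' : C * cfc (fun x : ℝ => x⁻¹) C = 1 := by
    nth_rewrite 1 [← cfc_id' ℝ C hCsa]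
    rw [mulC (fun x : ℝ => x) _ (fun _ => (1:ℝ)) (fun x _ => continuousAt_id) c3
      (fun x hx => mul_inv_cancel₀ hx.ne')]
    exact cfc_const_one ℝ C hCsa
  have hM_eq : cfc (fun x : ℝ => 2⁻¹ * (1 + x)) C = (2⁻¹ : ℝ) • (1 + C) := by
    rw [cfc_const_mul _ _ C (by fun_prop), cfc_const_add _ _ C (by fun_prop) hCsa,
      cfc_id' ℝ C hCsa, map_one]
  have hK_eq : cfc (fun x : ℝ => 2⁻¹ * (1 + x⁻¹)) C =
      (2⁻¹ : ℝ) • (1 + cfc (fun x : ℝ => x⁻¹) C) := by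
    rw [cfc_const_mul _ (fun x : ℝ => 1 + x⁻¹) C (contOn_aux hCpos (fun x hx =>
        continuousAt_const.add (continuousAt_inv₀ hx.ne'))),
      cfc_const_add _ _ C (contOn_aux hCpos c3) hCsa, map_one]
  -- operator-level identities
  have hB_eq : S * C * S = B := by
    rw [hCdef]
    simp only [mul_assoc, hTS, mul_one, hcl1]
  have hArith : arithMean A B = S * cfc (fun x : ℝ => 2⁻¹ * (1 + x)) C * S := by
    rw [hM_eq]
    unfold arithMean
    rw [← hSS, ← hB_eq]
    simp only [one_div, smul_add, smul_mul_assoc, mul_smul_comm, mul_add, add_mul,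
      mul_one, one_mul, mul_assoc]
  have hMpos : 0 ≤ cfc (fun x : ℝ => 2⁻¹ * (1 + x)) C :=
    cfc_nonneg fun x hx => by nlinarith [hCpos x hx]
  have hArith0 : 0 ≤ arithMean A B := by
    rw [hArith]; exact conj_nonneg' hSsa hMpos
  have hMu : IsUnit (cfc (fun x : ℝ => 2⁻¹ * (1 + x)) C) := ⟨⟨_, _, hMM', hM'M⟩, rfl⟩
  have hArithU : IsUnit (arithMean A B) := by
    rw [hArith]; exact (hSu.mul hMu).mul hSu
  have hArithInv : Ring.inverse (arithMean A B) =
      T * cfc (fun x : ℝ => (2⁻¹ * (1 + x))⁻¹) C * T := by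
    refine ringInverse_eq ?_ ?_
    · rw [hArith]
      simp only [mul_assoc, hcl1, hcl2, mk hMM', mk hM'M, hST, hTS, mul_one, one_mul]
    · rw [hArith]
      simp only [mul_assoc, hcl1, hcl2, mk hMM', mk hM'M, hST, hTS, mul_one, one_mul]
  have hBinv : Ring.inverse B = T * cfc (fun x : ℝ => x⁻¹) C * T := by
    refine ringInverse_eq ?_ ?_
    · rw [← hB_eq]
      simp only [mul_assoc, hcl1, hcl2, mk hCC', hST, hTS, mul_one, one_mul]
    · rw [← hB_eq]
      have hC'C : cfc (fun x : ℝ => x⁻¹) C * C = 1 := by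
        nth_rewrite 2 [← cfc_id' ℝ C hCsa]
        rw [mulC _ (fun x : ℝ => x) (fun _ => (1:ℝ)) c3 (fun x _ => continuousAt_id)
          (fun x hx => inv_mul_cancel₀ hx.ne')]
        exact cfc_const_one ℝ C hCsa
      simp only [mul_assoc, hcl1, hcl2, mk hC'C, hST, hTS, mul_one, one_mul]
  have hHarm : harmMean A B = S * cfc (fun x : ℝ => (2⁻¹ * (1 + x⁻¹))⁻¹) C * S := by
    unfold harmMean
    rw [hAinv, hBinv]
    have hsum : ((1:ℝ)/2) • (T * T + T * cfc (fun x : ℝ => x⁻¹) C * T) =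
        T * cfc (fun x : ℝ => 2⁻¹ * (1 + x⁻¹)) C * T := by
      rw [hK_eq]
      simp only [one_div, smul_add, smul_mul_assoc, mul_smul_comm, mul_add, add_mul,
        mul_one, one_mul, mul_assoc]
    rw [hsum]
    have hNK : cfc (fun x : ℝ => (2⁻¹ * (1 + x⁻¹))⁻¹) C *
        cfc (fun x : ℝ => 2⁻¹ * (1 + x⁻¹)) C = 1 := by
      rw [mulC _ _ (fun _ => (1:ℝ)) c5 c4 (fun x hx => inv_mul_cancel₀ (hxinv_pos x hx).ne')]
      exact cfc_const_one ℝ C hCsa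
    refine ringInverse_eq ?_ ?_
    · simp only [mul_assoc, hcl1, hcl2, mk hKN, mk hNK, hST, hTS, mul_one, one_mul]
    · simp only [mul_assoc, hcl1, hcl2, mk hKN, mk hNK, hST, hTS, mul_one, one_mul]
  have hG : geomMean A B = S * cfc (fun x : ℝ => x ^ (1/2 : ℝ)) C * S := by
    unfold geomMean wgm
    rw [← hSdef, ← hTdef, ← hCdef]
    rfl
  have hGpos : 0 ≤ geomMean A B := by
    rw [hG]
    exact conj_nonneg' hSsa (cfc_nonneg fun x hx => Real.rpow_nonneg (hCpos x hx).le _)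
  -- the key pointwise identity
  have hRMR : cfc (fun x : ℝ => x ^ (1/2 : ℝ)) C * cfc (fun x : ℝ => (2⁻¹ * (1 + x))⁻¹) C *
      cfc (fun x : ℝ => x ^ (1/2 : ℝ)) C = cfc (fun x : ℝ => (2⁻¹ * (1 + x⁻¹))⁻¹) C := by
    rw [mulC _ _ (fun x : ℝ => x ^ (1/2 : ℝ) * (2⁻¹ * (1 + x))⁻¹) (contAt_rpow _) c2
      (fun x hx => rfl)]
    refine mulC _ _ _ (fun x hx => (contAt_rpow _ x hx).mul (c2 x hx)) (contAt_rpow _) ?_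
    intro x hx
    have h1 : x ^ (1/2:ℝ) * x ^ (1/2:ℝ) = x := by
      rw [← Real.rpow_add hx]; norm_num
    have h2 : x ^ (1/2:ℝ) * (2⁻¹ * (1 + x))⁻¹ * x ^ (1/2:ℝ) =
        (x ^ (1/2:ℝ) * x ^ (1/2:ℝ)) * (2⁻¹ * (1 + x))⁻¹ := by ring
    rw [h2, h1]
    have h3 : (1:ℝ) + x ≠ 0 := by positivity
    have h4 : (1:ℝ) + x⁻¹ ≠ 0 := by
      have := inv_pos.mpr hx; positivity
    field_simp
    ring
  refine geomMean_unique hArith0 hArithU hGpos ?_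
  rw [hG, hArithInv, hHarm, ← hRMR]
  simp only [mul_assoc, hcl1, hcl2, hST, hTS, mul_one, one_mul]
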